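/- Let $G$ be a locally compact second countable group with Haar measure $m_G$, $\Gamma$ a discrete subgroup, and $\mathcal{O}$ a symmetric neighbourhood of the identity. For a bounded measurable set $B \subset G$, define $B^+ = \mathcal{O} B \mathcal{O}$ and $B^- = \bigcap_{u,v \in \mathcal{O}} u B v$. Let $\chi = \chi_{\mathcal{O}}/m_G(\mathcal{O})$ and $\phi(g\Gamma) = \sum_{\gamma \in \Gamma} \chi(g\gamma)$. Then for every $h \in \mathcal{O}$, $$\int_{B^-} \phi(g^{-1}h\Gamma)\, dm_G(g) \le |B \cap \Gamma| \le \int_{B^+} \phi(g^{-1}h\Gamma)\, dm_G(g).$$ -/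

import Mathlib

open MeasureTheory
open scoped Pointwise

private lemma discrete_inter_finite {G : Type*} [Group G] [TopologicalSpace G]
    [IsTopologicalGroup G] (Γ : Subgroup G) (hΓ : DiscreteTopology Γ)
    {S K : Set G} (hK : IsCompact K) (hSK : S ⊆ K) :
    {γ : Γ | (γ : G) ∈ S}.Finite := by
  obtain ⟨U, hUopen, hU⟩ := isOpen_induced_iff.mp (isOpen_discrete ({1} : Set Γ))
  have h1U : (1 : G) ∈ U := by
    have : (1 : Γ) ∈ Subtype.val ⁻¹' U := by rw [hU]; exact rfl
    exact this
  have hUΓ : ∀ γ : Γ, (γ : G) ∈ U → γ = 1 := fun γ hγ => by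
    have : γ ∈ Subtype.val ⁻¹' U := hγ
    rwa [hU, Set.mem_singleton_iff] at this
  obtain ⟨V, hVopen, h1V, hVV⟩ := exists_open_nhds_one_mul_subset (hUopen.mem_nhds h1U)
  set W : Set G := V ∩ V⁻¹ with hWdef
  have hWopen : IsOpen W := hVopen.inter hVopen.inv
  have h1W : (1 : G) ∈ W := ⟨h1V, by simpa using h1V⟩
  obtain ⟨t, -, ht⟩ := hK.elim_nhds_subcover (fun x => x • W)
    (fun x _ => (hWopen.smul x).mem_nhds ⟨1, h1W, mul_one x⟩)
  have hsub : ∀ g : G, {γ : Γ | (γ : G) ∈ g • W}.Subsingleton := by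
    intro g γ hγ γ' hγ'
    have hγ2 : (γ : G) ∈ g • W := hγ
    have hγ2' : (γ' : G) ∈ g • W := hγ'
    have h1 : g⁻¹ * γ ∈ W := by
      rwa [Set.mem_smul_set_iff_inv_smul_mem, smul_eq_mul] at hγ2
    have h2 : g⁻¹ * γ' ∈ W := by
      rwa [Set.mem_smul_set_iff_inv_smul_mem, smul_eq_mul] at hγ2'
    have hmem : (g⁻¹ * (γ : G))⁻¹ * (g⁻¹ * γ') ∈ V * V :=
      Set.mul_mem_mul (Set.mem_inv.mp h1.2) h2.1
    have hin : ((γ⁻¹ * γ' : Γ) : G) ∈ U := by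
      have he : (g⁻¹ * (γ : G))⁻¹ * (g⁻¹ * γ') = ((γ⁻¹ * γ' : Γ) : G) := by
        push_cast; group
      exact hVV (he ▸ hmem)
    exact inv_mul_eq_one.mp (hUΓ _ hin)
  have hcover : {γ : Γ | (γ : G) ∈ S} ⊆ ⋃ g ∈ t, {γ : Γ | (γ : G) ∈ g • W} := by
    intro γ hγ
    have hm := ht (hSK hγ)
    simp only [Set.mem_iUnion] at hm ⊢
    obtain ⟨g, hg, hmem⟩ := hm
    exact ⟨g, hg, hmem⟩
  exact Set.Finite.subset (t.finite_toSet.biUnion fun g _ => (hsub g).finite) hcover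

/-- Counting lattice points: comparison lemma. For a symmetric neighbourhood `O` of
the identity, `B⁺ = O * B * O`, `B⁻ = ⋂_{u,v ∈ O} u B v`, `χ` the normalized indicator
of `O` and `φ(gΓ) = ∑_{γ ∈ Γ} χ(gγ)`, one has for every `h ∈ O`:
`∫_{B⁻} φ(g⁻¹h) dm_G(g) ≤ |B ∩ Γ| ≤ ∫_{B⁺} φ(g⁻¹h) dm_G(g)`. -/
theorem lattice_point_comparison
    {G : Type*} [Group G] [TopologicalSpace G] [IsTopologicalGroup G]
    [LocallyCompactSpace G] [SecondCountableTopology G]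
    [MeasurableSpace G] [BorelSpace G]
    (μ : Measure G) [μ.IsHaarMeasure]
    (Γ : Subgroup G) (hΓ : DiscreteTopology Γ)
    (O : Set G) (hOmeas : MeasurableSet O) (hOnhd : O ∈ nhds (1 : G))
    (hOsym : O⁻¹ = O) (hOpos : 0 < μ O) (hOfin : μ O < ⊤)
    (hOcpt : IsCompact (closure O))
    (B : Set G) (hBmeas : MeasurableSet B) (hBcpt : IsCompact (closure B))
    (χ φ : G → ℝ)
    (hχ : χ = fun g => (μ O).toReal⁻¹ * Set.indicator O (1 : G → ℝ) g)
    (hφ : φ = fun g => ∑' γ : Γ, χ (g * (γ : G)))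
    (h : G) (hh : h ∈ O) :
    (∫ g in ⋂ u ∈ O, ⋂ v ∈ O, (fun b => u * b * v) '' B, φ (g⁻¹ * h) ∂μ)
      ≤ (Nat.card (B ∩ (Γ : Set G) : Set G) : ℝ) ∧
    (Nat.card (B ∩ (Γ : Set G) : Set G) : ℝ)
      ≤ ∫ g in O * B * O, φ (g⁻¹ * h) ∂μ := by
  have hcount : Countable Γ := by
    rw [← Set.countable_univ_iff (α := Γ)]
    have huniv : (Set.univ : Set Γ) = ⋃ n, {γ : Γ | (γ : G) ∈ compactCovering G n} := by
      ext γ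
      simp only [Set.mem_univ, Set.mem_iUnion, true_iff, Set.mem_setOf_eq]
      have : (γ : G) ∈ ⋃ n, compactCovering G n := by
        rw [iUnion_compactCovering]; trivial
      exact Set.mem_iUnion.mp this
    rw [huniv]
    exact Set.countable_iUnion fun n =>
      (discrete_inter_finite Γ hΓ (isCompact_compactCovering G n) le_rfl).countable
  simp only [hφ, hχ]
  set c : ℝ := (μ O).toReal⁻¹ with hc
  have h1O : (1 : G) ∈ O := mem_of_mem_nhds hOnhd
  have hμO0 : μ O ≠ 0 := hOpos.ne'
  have hμOtop : μ O ≠ ⊤ := hOfin.ne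
  have hsym : ∀ x : G, x ∈ O ↔ x⁻¹ ∈ O := fun x => by
    conv_lhs => rw [← hOsym, Set.mem_inv]
  have hc0 : 0 ≤ c := inv_nonneg.mpr ENNReal.toReal_nonneg
  have hcE : ENNReal.ofReal c = (μ O)⁻¹ := by
    rw [hc, ENNReal.ofReal_inv_of_pos (ENNReal.toReal_pos hμO0 hμOtop),
      ENNReal.ofReal_toReal hμOtop]
  have hχnn : ∀ x : G, 0 ≤ c * Set.indicator O (1 : G → ℝ) x := fun x =>
    mul_nonneg hc0 (Set.indicator_nonneg (fun _ _ => zero_le_one) x)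
  have hmemiff : ∀ (γ : G) (g : G), g ∈ (h * γ) • O ↔ g⁻¹ * h * γ ∈ O := by
    intro γ g
    rw [Set.mem_smul_set_iff_inv_smul_mem, smul_eq_mul, hsym ((h * γ)⁻¹ * g)]
    have he : ((h * γ)⁻¹ * g)⁻¹ = g⁻¹ * h * γ := by group
    rw [he]
  have hfinO : ∀ x : G, {γ : Γ | (γ : G) ∈ x • O}.Finite := fun x =>
    discrete_inter_finite Γ hΓ (hOcpt.smul x) (Set.smul_set_mono subset_closure)
  have hsummable : ∀ x : G, Summable (fun γ : Γ => c * Set.indicator O (1 : G → ℝ) (x * γ)) := by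
    intro x
    apply summable_of_ne_finset_zero (s := (hfinO x⁻¹).toFinset)
    intro γ hγ
    have hnot : (γ : G) ∉ x⁻¹ • O := fun hmem => hγ ((hfinO x⁻¹).mem_toFinset.mpr hmem)
    have hxo : x * γ ∉ O := by
      intro hxo
      exact hnot (by rw [Set.mem_smul_set_iff_inv_smul_mem, inv_inv, smul_eq_mul]; exact hxo)
    rw [Set.indicator_of_notMem hxo, mul_zero]
  -- the key integral formula
  have key : ∀ S : Set G,
      (∫ g in S, ∑' γ : Γ, c * Set.indicator O (1 : G → ℝ) (g⁻¹ * h * γ) ∂μ)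
        = (∑' γ : Γ, (μ O)⁻¹ * μ (((h * (γ : G)) • O) ∩ S)).toReal := by
    intro S
    set F : Γ → G → ENNReal :=
      fun γ => Set.indicator ((h * (γ : G)) • O) (fun _ => (μ O)⁻¹) with hF
    have hFmeas : ∀ γ : Γ, Measurable (F γ) := fun γ =>
      measurable_const.indicator (hOmeas.const_smul (h * (γ : G)))
    have hptF : ∀ (γ : Γ) (g : G),
        ENNReal.ofReal (c * Set.indicator O (1 : G → ℝ) (g⁻¹ * h * γ)) = F γ g := by
      intro γ g
      by_cases hg : g⁻¹ * h * (γ : G) ∈ O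
      · simp only [hF, Set.indicator_of_mem hg,
          Set.indicator_of_mem ((hmemiff (γ : G) g).mpr hg), Pi.one_apply, mul_one, hcE]
      · simp only [hF, Set.indicator_of_notMem hg,
          Set.indicator_of_notMem (fun hmem => hg ((hmemiff (γ : G) g).mp hmem)),
          mul_zero, ENNReal.ofReal_zero]
    have hofReal : ∀ g : G,
        ENNReal.ofReal (∑' γ : Γ, c * Set.indicator O (1 : G → ℝ) (g⁻¹ * h * γ))
          = ∑' γ : Γ, F γ g := by
      intro g
      rw [ENNReal.ofReal_tsum_of_nonneg (fun γ => hχnn _) (hsummable (g⁻¹ * h))]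
      exact tsum_congr fun γ => hptF γ g
    have hmeasf : Measurable fun g : G =>
        ∑' γ : Γ, c * Set.indicator O (1 : G → ℝ) (g⁻¹ * h * γ) := by
      have hmm : Measurable fun g : G => (∑' γ : Γ, F γ g).toReal :=
        (Measurable.ennreal_tsum hFmeas).ennreal_toReal
      have heqf : (fun g : G => ∑' γ : Γ, c * Set.indicator O (1 : G → ℝ) (g⁻¹ * h * γ))
          = fun g : G => (∑' γ : Γ, F γ g).toReal := by
        funext g
        rw [← hofReal g, ENNReal.toReal_ofReal (tsum_nonneg fun γ => hχnn _)]
      rw [heqf]; exact hmm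
    rw [integral_eq_lintegral_of_nonneg_ae
      (Filter.Eventually.of_forall fun g => tsum_nonneg fun γ => hχnn _)
      hmeasf.aestronglyMeasurable]
    congr 1
    calc ∫⁻ g, ENNReal.ofReal (∑' γ : Γ, c * Set.indicator O (1 : G → ℝ) (g⁻¹ * h * γ))
            ∂(μ.restrict S)
        = ∫⁻ g, ∑' γ : Γ, F γ g ∂(μ.restrict S) := lintegral_congr fun g => hofReal g
      _ = ∑' γ : Γ, ∫⁻ g, F γ g ∂(μ.restrict S) :=
          lintegral_tsum fun γ => (hFmeas γ).aemeasurable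
      _ = ∑' γ : Γ, (μ O)⁻¹ * μ (((h * (γ : G)) • O) ∩ S) := by
          refine tsum_congr fun γ => ?_
          simp only [hF]
          rw [lintegral_indicator_const (hOmeas.const_smul (h * (γ : G))),
            Measure.restrict_apply (hOmeas.const_smul (h * (γ : G)))]
  -- counting
  have hBfin : {γ : Γ | (γ : G) ∈ B}.Finite :=
    discrete_inter_finite Γ hΓ hBcpt subset_closure
  set s : Finset Γ := hBfin.toFinset with hs
  have hcard : (Nat.card (B ∩ (Γ : Set G) : Set G) : ℝ) = (s.card : ℝ) := by
    have h1 : Nat.card (B ∩ (Γ : Set G) : Set G) = Nat.card {γ : Γ | (γ : G) ∈ B} :=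
      Nat.card_congr
        { toFun := fun x => ⟨⟨x.1, x.2.2⟩, x.2.1⟩
          invFun := fun y => ⟨y.1.1, ⟨y.2, y.1.2⟩⟩
          left_inv := fun x => rfl
          right_inv := fun y => rfl }
    rw [h1, Nat.card_coe_set_eq, Set.ncard_eq_toFinset_card _ hBfin]
  have hterm_le : ∀ (γ : Γ) (S : Set G), (μ O)⁻¹ * μ (((h * (γ : G)) • O) ∩ S) ≤ 1 := by
    intro γ S
    calc (μ O)⁻¹ * μ (((h * (γ : G)) • O) ∩ S)
        ≤ (μ O)⁻¹ * μ ((h * (γ : G)) • O) :=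
          mul_le_mul_right (measure_mono Set.inter_subset_left) _
      _ = 1 := by
          rw [MeasureTheory.measure_smul (μ := μ) (h * (γ : G)) O,
            ENNReal.inv_mul_cancel hμO0 hμOtop]
  constructor
  · -- lower bound
    rw [key, hcard]
    have hzero : ∀ γ : Γ, γ ∉ s →
        (μ O)⁻¹ * μ (((h * (γ : G)) • O) ∩
          (⋂ u ∈ O, ⋂ v ∈ O, (fun b => u * b * v) '' B)) = 0 := by
      intro γ hγ
      have hγB : (γ : G) ∉ B := fun hmem => hγ (hBfin.mem_toFinset.mpr hmem)
      have hempty : ((h * (γ : G)) • O) ∩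
          (⋂ u ∈ O, ⋂ v ∈ O, (fun b => u * b * v) '' B) = ∅ := by
        ext x
        simp only [Set.mem_inter_iff, Set.mem_empty_iff_false, iff_false, not_and]
        rintro ⟨o, ho, rfl⟩ hxm
        have hx1 := Set.mem_iInter₂.mp (Set.mem_iInter₂.mp hxm h hh) o ho
        obtain ⟨b, hb, heq⟩ := hx1
        simp only [smul_eq_mul] at heq
        apply hγB
        have hbγ : b = (γ : G) := mul_left_cancel (mul_right_cancel heq)
        rwa [hbγ] at hb
      rw [hempty, measure_empty, mul_zero]
    rw [tsum_eq_sum hzero]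
    have hsum_le : (∑ γ ∈ s, (μ O)⁻¹ * μ (((h * (γ : G)) • O) ∩
        (⋂ u ∈ O, ⋂ v ∈ O, (fun b => u * b * v) '' B))) ≤ (s.card : ENNReal) := by
      calc (∑ γ ∈ s, (μ O)⁻¹ * μ (((h * (γ : G)) • O) ∩
            (⋂ u ∈ O, ⋂ v ∈ O, (fun b => u * b * v) '' B)))
          ≤ ∑ _γ ∈ s, 1 := Finset.sum_le_sum fun γ _ => hterm_le γ _
        _ = (s.card : ENNReal) := by simp
    calc (∑ γ ∈ s, (μ O)⁻¹ * μ (((h * (γ : G)) • O) ∩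
          (⋂ u ∈ O, ⋂ v ∈ O, (fun b => u * b * v) '' B))).toReal
        ≤ ((s.card : ENNReal)).toReal :=
          ENNReal.toReal_mono (by simp) hsum_le
      _ = (s.card : ℝ) := by simp
  · -- upper bound
    rw [key, hcard]
    have hterm1 : ∀ γ ∈ s, (μ O)⁻¹ * μ (((h * (γ : G)) • O) ∩ (O * B * O)) = 1 := by
      intro γ hγ
      have hγB : (γ : G) ∈ B := hBfin.mem_toFinset.mp hγ
      have hsubset : (h * (γ : G)) • O ⊆ O * B * O := by
        rintro x ⟨o, ho, rfl⟩
        simpa [smul_eq_mul, mul_assoc] using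
          Set.mul_mem_mul (Set.mul_mem_mul hh hγB) ho
      rw [Set.inter_eq_self_of_subset_left hsubset,
        MeasureTheory.measure_smul (μ := μ) (h * (γ : G)) O,
        ENNReal.inv_mul_cancel hμO0 hμOtop]
    have hub : (s.card : ENNReal)
        ≤ ∑' γ : Γ, (μ O)⁻¹ * μ (((h * (γ : G)) • O) ∩ (O * B * O)) := by
      calc (s.card : ENNReal) = ∑ _γ ∈ s, 1 := by simp
        _ = ∑ γ ∈ s, (μ O)⁻¹ * μ (((h * (γ : G)) • O) ∩ (O * B * O)) :=
            Finset.sum_congr rfl fun γ hγ => (hterm1 γ hγ).symm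
        _ ≤ _ := ENNReal.sum_le_tsum s
    -- finiteness of the total sum
    have hsupfin : {γ : Γ | (γ : G) ∈ h⁻¹ • (O * B * O * O)}.Finite := by
      refine discrete_inter_finite Γ hΓ
        ((((hOcpt.mul hBcpt).mul hOcpt).mul hOcpt).smul h⁻¹) (Set.smul_set_mono ?_)
      refine Set.mul_subset_mul (Set.mul_subset_mul (Set.mul_subset_mul ?_ ?_) ?_) ?_ <;>
        exact subset_closure
    have hzero' : ∀ γ : Γ, γ ∉ hsupfin.toFinset →
        (μ O)⁻¹ * μ (((h * (γ : G)) • O) ∩ (O * B * O)) = 0 := by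
      intro γ hγ
      have hnot : (γ : G) ∉ h⁻¹ • (O * B * O * O) := fun hmem =>
        hγ (hsupfin.mem_toFinset.mpr hmem)
      have hempty : ((h * (γ : G)) • O) ∩ (O * B * O) = ∅ := by
        ext x
        simp only [Set.mem_inter_iff, Set.mem_empty_iff_false, iff_false, not_and]
        rintro ⟨o, ho, rfl⟩ hxm
        apply hnot
        refine ⟨(h * (γ : G)) • o * o⁻¹, Set.mul_mem_mul hxm ((hsym o).mp ho), ?_⟩
        simp only [smul_eq_mul]; group
      rw [hempty, measure_empty, mul_zero]
    have hfin' : (∑' γ : Γ, (μ O)⁻¹ * μ (((h * (γ : G)) • O) ∩ (O * B * O))) ≠ ⊤ := by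
      rw [tsum_eq_sum hzero']
      refine (ENNReal.sum_lt_top.mpr fun γ _ => ?_).ne
      exact lt_of_le_of_lt (hterm_le γ _) ENNReal.one_lt_top
    calc (s.card : ℝ) = ((s.card : ENNReal)).toReal := by simp
      _ ≤ (∑' γ : Γ, (μ O)⁻¹ * μ (((h * (γ : G)) • O) ∩ (O * B * O))).toReal :=
          ENNReal.toReal_mono hfin' hub
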